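/- Let π > 0 and π̂_{r+1},…,π̂_p be real numbers with π + π̂_k > 0 for all k ∈ {r+1,…,p}. For u ≥ 0, the iterated integral of e^{−π̂_{r+1}(x_{r+1}−u)} · e^{−π̂_{r+2}(x_{r+2}−x_{r+1})} ⋯ e^{−π̂_p(x_p−x_{p−1})} · e^{−π x_p} over the ordered region u < x_{r+1} < x_{r+2} < ⋯ < x_p equals e^{−πu} · ∏_{k=r+1}^p 1/(π + π̂_k). -/

import Mathlib

open MeasureTheory

section PsiAux
open Set

-- 1-dim integral
lemma exp_int (b u : ℝ) (hb : 0 < b) :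
    ∫ x in Set.Ioi u, Real.exp (-b * x) = Real.exp (-b * u) / b := by
  have h1 : ∀ x : ℝ, HasDerivAt (fun x => -Real.exp (-b * x) / b) (Real.exp (-b * x)) x := by
    intro x
    have : HasDerivAt (fun x : ℝ => -b * x) (-b) x := by
      simpa using (hasDerivAt_id x).const_mul (-b)
    have h2 := ((this.exp).div_const b).neg
    have e1 : (fun x => -Real.exp (-b * x) / b) = -fun x => Real.exp (-b * x) / b := by
      funext y; simp [neg_div]
    rw [e1]
    exact h2.congr_deriv (by rw [mul_neg, neg_div, neg_neg, mul_div_assoc, div_self hb.ne', mul_one])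
  have htend : Filter.Tendsto (fun x => -Real.exp (-b * x) / b) Filter.atTop (nhds 0) := by
    have hb' : Filter.Tendsto (fun x : ℝ => -b * x) Filter.atTop Filter.atBot := by
      apply Filter.Tendsto.const_mul_atTop_of_neg (neg_neg_iff_pos.mpr hb) Filter.tendsto_id
    have := (Real.tendsto_exp_atBot.comp hb').neg.div_const b
    simpa using this
  have := integral_Ioi_of_hasDerivAt_of_tendsto' (fun x _ => h1 x)
    (exp_neg_integrableOn_Ioi u hb) htend
  rw [this]; ring
lemma lint_exp_shift (c0 p u : ℝ) (h : 0 < p + c0) :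
    ∫⁻ a in Set.Ioi u, ENNReal.ofReal (Real.exp (-c0 * (a - u)) * Real.exp (-p * a))
      = ENNReal.ofReal (Real.exp (-p * u) * (1 / (p + c0))) := by
  have heq : ∀ a : ℝ, Real.exp (-c0 * (a - u)) * Real.exp (-p * a)
      = Real.exp (-(p + c0) * a) * Real.exp (c0 * u) := by
    intro a; rw [← Real.exp_add, ← Real.exp_add]; ring_nf
  simp_rw [heq]
  rw [← ofReal_integral_eq_lintegral_ofReal
      ((exp_neg_integrableOn_Ioi u h).mul_const _)
      (Filter.Eventually.of_forall fun a => by positivity)]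
  rw [MeasureTheory.integral_mul_const, exp_int _ _ h]
  congr 1
  rw [div_mul_eq_mul_div, ← Real.exp_add]
  rw [mul_one_div]
  congr 2
  ring

lemma strictMono_cons {n : ℕ} (u : ℝ) (v : Fin (n + 1) → ℝ) :
    StrictMono (Fin.cons u v : Fin (n + 2) → ℝ) ↔ u < v 0 ∧ StrictMono v := by
  rw [Fin.strictMono_iff_lt_succ, Fin.strictMono_iff_lt_succ, Fin.forall_fin_succ]
  simp [← Fin.succ_castSucc]

lemma measurable_cons_apply {n : ℕ} (u : ℝ) (j : Fin (n + 2)) :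
    Measurable fun x : Fin (n + 1) → ℝ => (Fin.cons u x : Fin (n + 2) → ℝ) j := by
  refine Fin.cases ?_ ?_ j
  · simpa using measurable_const
  · intro i; simpa using measurable_pi_apply i

lemma measurableSet_strictMono_cons {n : ℕ} (u : ℝ) :
    MeasurableSet {x : Fin (n + 1) → ℝ | StrictMono (Fin.cons u x : Fin (n + 2) → ℝ)} := by
  have : {x : Fin (n + 1) → ℝ | StrictMono (Fin.cons u x : Fin (n + 2) → ℝ)}
      = ⋂ i : Fin (n + 1), {x | (Fin.cons u x : Fin (n + 2) → ℝ) i.castSucc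
          < (Fin.cons u x : Fin (n + 2) → ℝ) i.succ} := by
    ext x; simp [Fin.strictMono_iff_lt_succ, Set.mem_iInter]
  rw [this]
  exact MeasurableSet.iInter fun i =>
    measurableSet_lt (measurable_cons_apply u _) (measurable_cons_apply u _)
/-- The ENNReal-valued integrand at level `m`, base point `u`, rates `c`. -/
noncomputable def F (p : ℝ) (m : ℕ) (c : ℕ → ℝ) (u : ℝ) (x : Fin (m + 1) → ℝ) : ENNReal :=
  Set.indicator {x : Fin (m + 1) → ℝ | StrictMono (Fin.cons u x : Fin (m + 2) → ℝ)}
    (fun x => ENNReal.ofReal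
      ((∏ k : Fin (m + 1), Real.exp (-(c k.val) *
          ((Fin.cons u x : Fin (m + 2) → ℝ) k.succ -
           (Fin.cons u x : Fin (m + 2) → ℝ) k.castSucc))) *
        Real.exp (-p * x (Fin.last m)))) x

lemma measurable_F (p : ℝ) (m : ℕ) (c : ℕ → ℝ) (u : ℝ) : Measurable (F p m c u) := by
  refine Measurable.indicator ?_ (measurableSet_strictMono_cons u)
  refine ENNReal.measurable_ofReal.comp ?_
  refine Measurable.mul ?_ (Real.measurable_exp.comp ((measurable_pi_apply _).const_mul _))
  exact Finset.measurable_prod _ fun k _ =>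
    Real.measurable_exp.comp
      (((measurable_cons_apply u _).sub (measurable_cons_apply u _)).const_mul _)

lemma measurable_cons_pair {n : ℕ} :
    Measurable fun q : ℝ × (Fin (n + 1) → ℝ) => (Fin.cons q.1 q.2 : Fin (n + 2) → ℝ) := by
  rw [measurable_pi_iff]
  intro j
  refine Fin.cases ?_ ?_ j
  · simpa using measurable_fst
  · intro i; simp only [Fin.cons_succ]; exact (measurable_pi_apply i).comp measurable_snd

lemma aux_lint (p : ℝ) (hp : 0 < p) :
    ∀ (m : ℕ) (c : ℕ → ℝ), (∀ k, k ≤ m → 0 < p + c k) → ∀ u : ℝ,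
    (∫⁻ x : Fin (m + 1) → ℝ, F p m c u x)
      = ENNReal.ofReal (Real.exp (-p * u)) *
        ∏ k ∈ Finset.range (m + 1), ENNReal.ofReal (1 / (p + c k)) := by
  intro m
  induction m with
  | zero =>
    intro c hc u
    have hmp := (MeasureTheory.volume_preserving_funUnique (Fin 1) ℝ).symm
    show (∫⁻ x : Fin 1 → ℝ, F p 0 c u x) = _
    erw [← hmp.lintegral_comp_emb
      (MeasurableEquiv.measurableEmbedding _) (F p 0 c u)]
    have key : ∀ a : ℝ, F p 0 c u ((MeasurableEquiv.funUnique (Fin 1) ℝ).symm a)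
        = Set.indicator (Set.Ioi u)
            (fun a => ENNReal.ofReal (Real.exp (-(c 0) * (a - u)) * Real.exp (-p * a))) a := by
      intro a
      have hsymm : (MeasurableEquiv.funUnique (Fin 1) ℝ).symm a = fun _ : Fin 1 => a := by
        ext i; rfl
      rw [hsymm]
      unfold F
      have hmem : ((fun _ : Fin 1 => a) ∈
          {x : Fin 1 → ℝ | StrictMono (Fin.cons u x : Fin 2 → ℝ)}) ↔ u < a := by
        simp only [Set.mem_setOf_eq, strictMono_cons]
        constructor
        · exact fun h => h.1
        · refine fun h => ⟨h, fun i j hij => absurd hij ?_⟩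
          rw [Fin.lt_def]
          have := i.isLt; have := j.isLt
          omega
      by_cases hua : u < a
      · rw [Set.indicator_of_mem (hmem.mpr hua), Set.indicator_of_mem (Set.mem_Ioi.mpr hua)]
        congr 1
        simp [Fin.prod_univ_one]
      · rw [Set.indicator_of_notMem (fun hm => hua (hmem.mp hm)),
          Set.indicator_of_notMem (fun hm => hua (Set.mem_Ioi.mp hm))]
    simp_rw [key]
    rw [lintegral_indicator measurableSet_Ioi, lint_exp_shift _ _ _ (hc 0 (by norm_num))]
    rw [Finset.prod_range_one, ENNReal.ofReal_mul (Real.exp_nonneg _)]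
  | succ n ih =>
    intro c hc u
    have hc0 : 0 < p + c 0 := hc 0 (by omega)
    set e := MeasurableEquiv.piFinSuccAbove (fun _ : Fin (n + 2) => ℝ) 0 with he
    have hmp := (MeasureTheory.volume_preserving_piFinSuccAbove (fun _ : Fin (n + 2) => ℝ) 0).symm
    rw [← hmp.lintegral_comp_emb (MeasurableEquiv.measurableEmbedding _) (F p (n + 1) c u)]
    have hsymm : ∀ q : ℝ × (Fin (n + 1) → ℝ), (e.symm q : Fin (n + 2) → ℝ) = Fin.cons q.1 q.2 := by
      intro q
      show (Fin.insertNthEquiv (fun _ => ℝ) 0) q = _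
      simp [Fin.insertNthEquiv, Fin.insertNth_zero']
    -- pointwise splitting
    have hsplit : ∀ (a : ℝ) (y : Fin (n + 1) → ℝ),
        F p (n + 1) c u (Fin.cons a y)
          = (Set.Ioi u).indicator (fun a => ENNReal.ofReal (Real.exp (-(c 0) * (a - u)))) a
            * F p n (fun k => c (k + 1)) a y := by
      intro a y
      unfold F
      by_cases h1 : u < a
      · by_cases h2 : StrictMono (Fin.cons a y : Fin (n + 2) → ℝ)
        · rw [Set.indicator_of_mem (show Fin.cons a y ∈
              {x : Fin (n + 2) → ℝ | StrictMono (Fin.cons u x : Fin (n + 3) → ℝ)} from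
              (strictMono_cons u (Fin.cons a y)).mpr ⟨by simpa using h1, h2⟩),
            Set.indicator_of_mem (Set.mem_Ioi.mpr h1),
            Set.indicator_of_mem (show y ∈
              {x : Fin (n + 1) → ℝ | StrictMono (Fin.cons a x : Fin (n + 2) → ℝ)} from h2)]
          rw [← ENNReal.ofReal_mul (Real.exp_nonneg _)]
          congr 1
          have hprod : (∏ k : Fin (n + 2), Real.exp (-(c k.val) *
                ((Fin.cons u (Fin.cons a y) : Fin (n + 3) → ℝ) k.succ -
                 (Fin.cons u (Fin.cons a y) : Fin (n + 3) → ℝ) k.castSucc)))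
              = Real.exp (-(c 0) * (a - u)) *
                ∏ k : Fin (n + 1), Real.exp (-(c (k.val + 1)) *
                  ((Fin.cons a y : Fin (n + 2) → ℝ) k.succ -
                   (Fin.cons a y : Fin (n + 2) → ℝ) k.castSucc)) := by
            simp only [Fin.prod_univ_succ, Fin.cons_succ, Fin.cons_zero, ← Fin.succ_castSucc,
              Fin.val_succ, Fin.castSucc_zero, Fin.val_zero]
          have hlast : (Fin.cons a y : Fin (n + 2) → ℝ) (Fin.last (n + 1)) = y (Fin.last n) := by
            rw [← Fin.succ_last, Fin.cons_succ]
          rw [hprod, hlast]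
          ring
        · rw [Set.indicator_of_notMem (show Fin.cons a y ∉
              {x : Fin (n + 2) → ℝ | StrictMono (Fin.cons u x : Fin (n + 3) → ℝ)} from
              fun hmem => h2 ((strictMono_cons u (Fin.cons a y)).mp hmem).2),
            Set.indicator_of_notMem (show y ∉
              {x : Fin (n + 1) → ℝ | StrictMono (Fin.cons a x : Fin (n + 2) → ℝ)} from h2),
            mul_zero]
      · rw [Set.indicator_of_notMem (show Fin.cons a y ∉
            {x : Fin (n + 2) → ℝ | StrictMono (Fin.cons u x : Fin (n + 3) → ℝ)} from
            fun hmem => h1 (by simpa using ((strictMono_cons u (Fin.cons a y)).mp hmem).1)),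
          Set.indicator_of_notMem (show a ∉ Set.Ioi u from h1), zero_mul]
    have hmeas : Measurable fun q : ℝ × (Fin (n + 1) → ℝ) => F p (n + 1) c u (e.symm q) := by
      have : (fun q : ℝ × (Fin (n + 1) → ℝ) => F p (n + 1) c u (e.symm q))
          = fun q => F p (n + 1) c u (Fin.cons q.1 q.2) := by
        funext q; rw [hsymm]
      rw [this]
      exact (measurable_F p (n + 1) c u).comp measurable_cons_pair
    rw [Measure.volume_eq_prod,
      lintegral_prod _ (by rw [← Measure.volume_eq_prod]; exact hmeas.aemeasurable)]
    have hP : (∏ k ∈ Finset.range (n + 1), ENNReal.ofReal (1 / (p + c (k + 1))))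
        = ENNReal.ofReal (∏ k ∈ Finset.range (n + 1), 1 / (p + c (k + 1))) := by
      rw [← ENNReal.ofReal_prod_of_nonneg]
      intro k hk
      have := hc (k + 1) (by simp at hk; omega)
      positivity
    have hinner : ∀ a : ℝ,
        (∫⁻ y : Fin (n + 1) → ℝ, F p (n + 1) c u (e.symm (a, y)))
          = (Set.Ioi u).indicator (fun a => ENNReal.ofReal (Real.exp (-(c 0) * (a - u)))) a
            * (ENNReal.ofReal (Real.exp (-p * a)) *
               ∏ k ∈ Finset.range (n + 1), ENNReal.ofReal (1 / (p + c (k + 1)))) := by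
      intro a
      have : ∀ y : Fin (n + 1) → ℝ, F p (n + 1) c u (e.symm (a, y))
          = (Set.Ioi u).indicator (fun a => ENNReal.ofReal (Real.exp (-(c 0) * (a - u)))) a
            * F p n (fun k => c (k + 1)) a y := by
        intro y; rw [hsymm, hsplit]
      simp_rw [this]
      have hne : (Set.Ioi u).indicator (fun a => ENNReal.ofReal (Real.exp (-(c 0) * (a - u)))) a
          ≠ ⊤ := ne_top_of_le_ne_top ENNReal.ofReal_ne_top (Set.indicator_le_self _ _ a)
      rw [lintegral_const_mul'
        ((Set.Ioi u).indicator (fun a => ENNReal.ofReal (Real.exp (-(c 0) * (a - u)))) a)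
        (fun y => F p n (fun k => c (k + 1)) a y) hne]
      rw [ih (fun k => c (k + 1)) (fun k hk => hc (k + 1) (by omega)) a]
    change (∫⁻ (x : ℝ), ∫⁻ (y : Fin (n + 1) → ℝ), F p (n + 1) c u (e.symm (x, y))) = _
    simp_rw [hinner]
    have hrw : ∀ a : ℝ,
        (Set.Ioi u).indicator (fun a => ENNReal.ofReal (Real.exp (-(c 0) * (a - u)))) a
            * (ENNReal.ofReal (Real.exp (-p * a)) *
               ∏ k ∈ Finset.range (n + 1), ENNReal.ofReal (1 / (p + c (k + 1))))
          = (Set.Ioi u).indicator (fun a => ENNReal.ofReal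
              (Real.exp (-(c 0) * (a - u)) * Real.exp (-p * a))) a
            * ENNReal.ofReal (∏ k ∈ Finset.range (n + 1), 1 / (p + c (k + 1))) := by
      intro a
      by_cases ha : a ∈ Set.Ioi u
      · rw [Set.indicator_of_mem ha, Set.indicator_of_mem ha, hP,
          ENNReal.ofReal_mul (Real.exp_nonneg _)]
        ring
      · rw [Set.indicator_of_notMem ha, Set.indicator_of_notMem ha, zero_mul, zero_mul]
    simp_rw [hrw]
    rw [lintegral_mul_const' _ _ ENNReal.ofReal_ne_top,
      lintegral_indicator measurableSet_Ioi,
      lint_exp_shift _ _ _ hc0, ← hP]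
    rw [Finset.prod_range_succ' (fun k => ENNReal.ofReal (1 / (p + c k))) (n + 1)]
    rw [ENNReal.ofReal_mul (Real.exp_nonneg _)]
    ring

end PsiAux

/-- Explicit formula for `Ψ_{r,p+1}(u, π)`: the iterated convolution of the
exponential kernels `e^{-πh_k(x_k - x_{k-1})}` over the ordered region
`u < x_{r+1} < ⋯ < x_p`, against `e^{-π x_p}`, equals
`e^{-π u} ∏_{k=r+1}^p 1/(π + πh k)`.  Here `p = r + m + 1`. -/
theorem psi_r_p_plus_one (r m : ℕ) (π : ℝ) (hπ : 0 < π) (πh : ℕ → ℝ)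
    (h : ∀ k ∈ Finset.Icc (r + 1) (r + m + 1), 0 < π + πh k)
    (u : ℝ) (hu : 0 ≤ u) :
    (∫ x : Fin (m + 1) → ℝ,
      Set.indicator {x : Fin (m + 1) → ℝ | StrictMono (Fin.cons u x : Fin (m + 2) → ℝ)}
        (fun x =>
          (∏ k : Fin (m + 1),
            Real.exp (-(πh (r + 1 + k.val)) *
              ((Fin.cons u x : Fin (m + 2) → ℝ) k.succ -
               (Fin.cons u x : Fin (m + 2) → ℝ) k.castSucc))) *
          Real.exp (-π * x (Fin.last m))) x)
    = Real.exp (-π * u) * ∏ k ∈ Finset.Icc (r + 1) (r + m + 1), 1 / (π + πh k) := by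
  set c : ℕ → ℝ := fun k => πh (r + 1 + k) with hcdef
  set g : (Fin (m + 1) → ℝ) → ℝ := fun x =>
    (∏ k : Fin (m + 1),
      Real.exp (-(πh (r + 1 + k.val)) *
        ((Fin.cons u x : Fin (m + 2) → ℝ) k.succ -
         (Fin.cons u x : Fin (m + 2) → ℝ) k.castSucc))) *
      Real.exp (-π * x (Fin.last m)) with hgdef
  set S : Set (Fin (m + 1) → ℝ) :=
    {x : Fin (m + 1) → ℝ | StrictMono (Fin.cons u x : Fin (m + 2) → ℝ)} with hSdef
  have hgm : Measurable g := by
    refine Measurable.mul ?_ (Real.measurable_exp.comp ((measurable_pi_apply _).const_mul _))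
    exact Finset.measurable_prod _ fun k _ =>
      Real.measurable_exp.comp
        (((measurable_cons_apply u _).sub (measurable_cons_apply u _)).const_mul _)
  have hfm : AEStronglyMeasurable (S.indicator g) volume :=
    (hgm.indicator (measurableSet_strictMono_cons u)).aestronglyMeasurable
  have hpos : 0 ≤ᵐ[volume] S.indicator g :=
    Filter.Eventually.of_forall (Set.indicator_nonneg fun x _ => by
      have : 0 ≤ Real.exp (-π * x (Fin.last m)) := Real.exp_nonneg _
      have h2 : (0:ℝ) ≤ ∏ k : Fin (m + 1),
          Real.exp (-(πh (r + 1 + k.val)) *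
            ((Fin.cons u x : Fin (m + 2) → ℝ) k.succ -
             (Fin.cons u x : Fin (m + 2) → ℝ) k.castSucc)) :=
        Finset.prod_nonneg fun k _ => Real.exp_nonneg _
      exact mul_nonneg h2 this)
  rw [MeasureTheory.integral_eq_lintegral_of_nonneg_ae hpos hfm]
  have hlift : ∀ x, ENNReal.ofReal (S.indicator g x) = F π m c u x := by
    intro x
    unfold F
    by_cases hx : x ∈ S
    · rw [Set.indicator_of_mem hx, Set.indicator_of_mem hx]
    · rw [Set.indicator_of_notMem hx, Set.indicator_of_notMem hx, ENNReal.ofReal_zero]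
  simp_rw [hlift]
  have hc : ∀ k, k ≤ m → 0 < π + c k := by
    intro k hk
    exact h (r + 1 + k) (Finset.mem_Icc.mpr ⟨by omega, by omega⟩)
  rw [aux_lint π hπ m c hc u]
  have hprod : ∏ k ∈ Finset.range (m + 1), ENNReal.ofReal (1 / (π + c k))
      = ENNReal.ofReal (∏ k ∈ Finset.range (m + 1), 1 / (π + c k)) := by
    rw [← ENNReal.ofReal_prod_of_nonneg]
    intro k hk
    have := hc k (by simp at hk; omega)
    positivity
  rw [hprod, ← ENNReal.ofReal_mul (Real.exp_nonneg _), ENNReal.toReal_ofReal (by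
    have : 0 ≤ ∏ k ∈ Finset.range (m + 1), 1 / (π + c k) :=
      Finset.prod_nonneg fun k hk => by
        have := hc k (by simp at hk; omega); positivity
    positivity)]
  congr 1
  rw [← Finset.Ico_add_one_right_eq_Icc, Finset.prod_Ico_eq_prod_range]
  have : r + m + 1 + 1 - (r + 1) = m + 1 := by omega
  rw [this]
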